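/- With the notation of the boost-link theorem, the gamma factor of the linking boost is γ = (γ₁² + γ₂² + γ₁₂ - 1)/(1 + 2γ₁γ₂ - γ₁₂), and it satisfies γ = γ₁₂ - ‖s⊥‖²·(γ₁₂² - 1)/(1 + 2γ₁γ₂ - γ₁₂), where s⊥ is the component of s orthogonal to the plane spanned by s₁ and s₂. In particular γ ≤ γ₁₂, with equality iff s lies in span{s₁, s₂}. -/

import Mathlib

/-- Base-point dependence of the link gamma factor:
`γ = γ₁₂ - ‖s⊥‖²(γ₁₂²-1)/(1+2γ₁γ₂-γ₁₂)`, hence `γ ≤ γ₁₂`, with equality iff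
`s` lies in the plane spanned by `s₁` and `s₂`. -/
theorem link_gamma_base_point_dependence (V : Type*) [AddCommGroup V]
    [Module ℝ V] (η : LinearMap.BilinForm ℝ V) (hsymm : ∀ u v, η u v = η v u)
    (s s₁ s₂ : V)
    (hs : η s s = -1) (hs₁ : η s₁ s₁ = -1) (hs₂ : η s₂ s₂ = -1)
    (γ₁ γ₂ γ₁₂ : ℝ)
    (hγ₁ : η s s₁ = -γ₁) (hγ₂ : η s s₂ = -γ₂) (hγ₁₂ : η s₁ s₂ = -γ₁₂)
    (h1 : 1 ≤ γ₁) (h2 : 1 ≤ γ₂) (h12 : 1 < γ₁₂)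
    (hD : 1 < 1 + 2 * γ₁ * γ₂ - γ₁₂)
    (hpos : ∀ u, η s₁ u = 0 → η s₂ u = 0 → 0 ≤ η u u ∧ (η u u = 0 → u = 0))
    (sperp : V)
    (hsperp : sperp = s - (γ₁₂ ^ 2 - 1)⁻¹ •
      ((-γ₁) • s₁ + (-γ₂) • s₂ - γ₁₂ • ((-γ₂) • s₁ + (-γ₁) • s₂)))
    (γ : ℝ)
    (hγ : γ = (γ₁ ^ 2 + γ₂ ^ 2 + γ₁₂ - 1) / (1 + 2 * γ₁ * γ₂ - γ₁₂)) :
    γ = γ₁₂ - η sperp sperp * (γ₁₂ ^ 2 - 1) / (1 + 2 * γ₁ * γ₂ - γ₁₂) ∧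
      γ ≤ γ₁₂ ∧
      (γ = γ₁₂ ↔ s ∈ Submodule.span ℝ ({s₁, s₂} : Set V)) := by
  have hd : γ₁₂ ^ 2 - 1 ≠ 0 := by nlinarith
  have hdpos : 0 < γ₁₂ ^ 2 - 1 := by nlinarith
  have hDpos : 0 < 1 + 2 * γ₁ * γ₂ - γ₁₂ := by linarith
  have hDne : (1 + 2 * γ₁ * γ₂ - γ₁₂) ≠ 0 := hDpos.ne'
  have hs₂s₁ : η s₂ s₁ = -γ₁₂ := by rw [hsymm]; exact hγ₁₂
  have hs₁s : η s₁ s = -γ₁ := by rw [hsymm]; exact hγ₁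
  have hs₂s : η s₂ s = -γ₂ := by rw [hsymm]; exact hγ₂
  have e1 : η s₁ sperp = 0 := by
    simp only [hsperp, map_sub, map_add, map_smul, smul_eq_mul,
      hs₁s, hs₁, hγ₁₂]
    field_simp
    ring
  have e2 : η s₂ sperp = 0 := by
    simp only [hsperp, map_sub, map_add, map_smul, smul_eq_mul,
      hs₂s, hs₂s₁, hs₂]
    field_simp
    ring
  have hval : η sperp sperp * (γ₁₂ ^ 2 - 1)
      = 1 - γ₁ ^ 2 - γ₂ ^ 2 - γ₁₂ ^ 2 + 2 * γ₁ * γ₂ * γ₁₂ := by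
    simp only [hsperp, map_sub, map_add, map_smul, LinearMap.sub_apply,
      LinearMap.add_apply, LinearMap.smul_apply, smul_eq_mul,
      hs, hs₁, hs₂, hγ₁, hγ₂, hγ₁₂, hs₁s, hs₂s, hs₂s₁]
    field_simp
    ring
  have part1 : γ = γ₁₂ - η sperp sperp * (γ₁₂ ^ 2 - 1) / (1 + 2 * γ₁ * γ₂ - γ₁₂) := by
    rw [hγ]
    rw [eq_sub_iff_add_eq, ← add_div, div_eq_iff hDne]
    linarith [hval]
  have hnn : 0 ≤ η sperp sperp := (hpos sperp e1 e2).1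
  have part2 : γ ≤ γ₁₂ := by
    rw [part1]
    have : 0 ≤ η sperp sperp * (γ₁₂ ^ 2 - 1) / (1 + 2 * γ₁ * γ₂ - γ₁₂) :=
      div_nonneg (mul_nonneg hnn hdpos.le) hDpos.le
    linarith
  refine ⟨part1, part2, ?_, ?_⟩
  · -- γ = γ₁₂ → s ∈ span
    intro heq
    have h0 : η sperp sperp = 0 := by
      rw [part1] at heq
      have : η sperp sperp * (γ₁₂ ^ 2 - 1) / (1 + 2 * γ₁ * γ₂ - γ₁₂) = 0 := by linarith
      have h2' : η sperp sperp * (γ₁₂ ^ 2 - 1) = 0 := by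
        field_simp at this; linarith
      nlinarith
    have hz : sperp = 0 := (hpos sperp e1 e2).2 h0
    have hseq : s = (γ₁₂ ^ 2 - 1)⁻¹ •
        ((-γ₁) • s₁ + (-γ₂) • s₂ - γ₁₂ • ((-γ₂) • s₁ + (-γ₁) • s₂)) := by
      have := hsperp
      rw [hz, eq_comm, sub_eq_zero] at this
      exact this
    rw [Submodule.mem_span_pair]
    refine ⟨(γ₁₂ ^ 2 - 1)⁻¹ * (γ₁₂ * γ₂ - γ₁), (γ₁₂ ^ 2 - 1)⁻¹ * (γ₁₂ * γ₁ - γ₂), ?_⟩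
    rw [hseq]
    module
  · -- s ∈ span → γ = γ₁₂
    intro hmem
    rw [Submodule.mem_span_pair] at hmem
    obtain ⟨a, b, hab⟩ := hmem
    have hrep : sperp = (a - (γ₁₂ ^ 2 - 1)⁻¹ * (γ₁₂ * γ₂ - γ₁)) • s₁ +
        (b - (γ₁₂ ^ 2 - 1)⁻¹ * (γ₁₂ * γ₁ - γ₂)) • s₂ := by
      rw [hsperp, ← hab]
      module
    have h0 : η sperp sperp = 0 := by
      nth_rewrite 1 [hrep]
      simp [LinearMap.add_apply, LinearMap.smul_apply, smul_eq_mul, e1, e2]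
    rw [part1, h0]
    ring
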